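/- Suppose 0 < L ≤ C_opt(G) ≤ U with U = n·L, and let S := 2^{−⌈log₂ n⌉}·U/(2n). Then C_opt(G↓S) ≥ n; in particular C_opt(G↓S) ≥ b for every natural number b ≤ n. -/

import Mathlib

/-- `IsWalk tl hd u v p` : the list of edges `p` forms a walk from `u` to `v`
in the directed multigraph whose edges `e` go from `tl e` to `hd e`. -/
def IsWalk {V E : Type} (tl hd : E → V) : V → V → List E → Prop
  | u, v, [] => u = v
  | u, v, e :: es => tl e = u ∧ IsWalk tl hd (hd e) v es

/-- `IsPath tl hd u v p` : `p` is a walk from `u` to `v` visiting pairwise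
distinct vertices. -/
def IsPath {V E : Type} (tl hd : E → V) (u v : V) (p : List E) : Prop :=
  IsWalk tl hd u v p ∧ (u :: p.map hd).Nodup

lemma sum_floor_ge {E : Type} (c : E → ℝ) (S : ℝ) (p : List E) :
    (p.map c).sum / S - p.length ≤ (p.map fun e => (⌊c e / S⌋ : ℝ)).sum := by
  induction p with
  | nil => simp
  | cons e es ih =>
      have h := Int.sub_one_lt_floor (c e / S)
      simp only [List.map_cons, List.sum_cons, List.length_cons] at *
      rw [add_div]
      push_cast
      linarith [ih, h]

/-- Lemma: if `0 < L ≤ C_opt(G) ≤ U` with `U = n·L` and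
`S = 2^(-⌈log₂ n⌉)·U/(2n)`, then the floor-scaled optimum at scaling factor `S`
is at least `n`, hence at least `b` for every natural number `b ≤ n`. -/
theorem stmt_10 {V E : Type} [Fintype V] [Fintype E]
    (tl hd : E → V) (c r : E → ℝ)
    (hc : ∀ e, 0 ≤ c e) (hr : ∀ e, 0 ≤ r e)
    (hn : 2 ≤ Fintype.card V)
    (s t : V) (hst : s ≠ t) (R : ℝ) (hR : 0 ≤ R)
    -- `Copt` is the minimum cost of a feasible s–t path
    (Copt : ℝ)
    (hCopt₁ : ∃ p, IsPath tl hd s t p ∧ (p.map r).sum ≤ R ∧ (p.map c).sum = Copt)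
    (hCopt₂ : ∀ p, IsPath tl hd s t p → (p.map r).sum ≤ R → Copt ≤ (p.map c).sum)
    (L U : ℝ) (hL : 0 < L) (hLC : L ≤ Copt) (hCU : Copt ≤ U)
    (hUnL : U = Fintype.card V * L)
    (S : ℝ)
    (hSdef : S = (2 : ℝ) ^ (-(⌈Real.logb 2 (Fintype.card V : ℝ)⌉₊ : ℤ)) * U /
      (2 * Fintype.card V))
    -- `CoptS` is the minimum floor-scaled cost of a feasible s–t path
    (CoptS : ℝ)
    (hCoptS₁ : ∃ p, IsPath tl hd s t p ∧ (p.map r).sum ≤ R ∧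
      (p.map fun e => (⌊c e / S⌋ : ℝ)).sum = CoptS)
    (hCoptS₂ : ∀ p, IsPath tl hd s t p → (p.map r).sum ≤ R →
      CoptS ≤ (p.map fun e => (⌊c e / S⌋ : ℝ)).sum) :
    (Fintype.card V : ℝ) ≤ CoptS ∧
      ∀ b : ℕ, b ≤ Fintype.card V → (b : ℝ) ≤ CoptS := by
  set n := Fintype.card V with hn'
  have hnR : (2 : ℝ) ≤ (n : ℝ) := by exact_mod_cast hn
  have hnpos : (0 : ℝ) < n := by linarith
  set k := ⌈Real.logb 2 (n : ℝ)⌉₊ with hk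
  -- n ≤ 2^k
  have h2k : (n : ℝ) ≤ 2 ^ k := by
    have h1 : (n : ℝ) = (2 : ℝ) ^ (Real.logb 2 (n : ℝ)) := by
      rw [Real.rpow_logb (by norm_num) (by norm_num) hnpos]
    have h2 : (2 : ℝ) ^ (Real.logb 2 (n : ℝ)) ≤ (2 : ℝ) ^ ((k : ℝ)) := by
      apply Real.rpow_le_rpow_of_exponent_le (by norm_num)
      exact Nat.le_ceil _
    rw [h1]
    calc (2 : ℝ) ^ (Real.logb 2 (n : ℝ)) ≤ (2 : ℝ) ^ ((k : ℝ)) := h2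
      _ = 2 ^ k := by rw [Real.rpow_natCast]
  have h2kpos : (0 : ℝ) < 2 ^ k := by positivity
  have hSeq : S = ((2 : ℝ) ^ k)⁻¹ * U / (2 * n) := by
    rw [hSdef, zpow_neg, zpow_natCast]
  have hUpos : 0 < U := by rw [hUnL]; positivity
  have hSpos : 0 < S := by rw [hSeq]; positivity
  -- 2n S ≤ L
  have hkey : 2 * (n : ℝ) * S ≤ L := by
    rw [hSeq, hUnL]
    have hinv : ((2:ℝ)^k)⁻¹ * (n : ℝ) ≤ 1 := by
      rw [inv_mul_le_iff₀ h2kpos]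
      linarith
    have heq : 2 * (n:ℝ) * (((2:ℝ)^k)⁻¹ * ((n:ℝ)*L)/(2*(n:ℝ))) = ((2:ℝ)^k)⁻¹ * (n:ℝ) * L := by
      field_simp
    rw [heq]
    nlinarith
  have h2n : 2 * (n : ℝ) ≤ L / S := by
    rw [le_div_iff₀ hSpos]
    linarith
  obtain ⟨p, hp, hpr, hpc⟩ := hCoptS₁
  have hlen : (p.length : ℝ) + 1 ≤ n := by
    have := hp.2.length_le_card
    simp at this
    exact_mod_cast this
  have hcsum : Copt ≤ (p.map c).sum := hCopt₂ p hp hpr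
  have hfloor := sum_floor_ge c S p
  have hLS : L / S ≤ (p.map c).sum / S := by
    gcongr
    linarith
  have hfinal : (n : ℝ) ≤ CoptS := by
    rw [← hpc]
    have : ((n : ℝ)) + 1 ≤ (p.map c).sum / S - p.length := by
      have : (p.length : ℝ) ≤ (n : ℝ) - 1 := by linarith
      nlinarith
    linarith
  refine ⟨hfinal, fun b hb => ?_⟩
  have : (b : ℝ) ≤ (n : ℝ) := by exact_mod_cast hb
  linarith
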